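/- The Dinkelbach iteration is monotone: if x^(l) minimizes F(μ^(l), ·) over C and μ^(l+1) := (L̃ − t₀R_b(x^(l)))/R_a(x^(l)), then μ^(l+1) ≤ μ^(l) whenever F(μ^(l), x^(l)) ≤ 0, with equality only if μ^(l) = μ*. -/
import Mathlib


/-- Monotonicity of the Dinkelbach iteration: if xₗ minimizes F(μₗ,·) over C
and F(μₗ,xₗ) ≤ 0, then μₗ₊₁ := (L̃ − t₀R_b(xₗ))/R_a(xₗ) ≤ μₗ, with
equality only if μₗ equals the optimal ratio μ*. -/
theorem stmt_8 {E : Type*} [TopologicalSpace E] (C : Set E)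
    (hC : C.Nonempty) (hcomp : IsCompact C)
    (Rb Ra : E → ℝ) (hRbc : ContinuousOn Rb C) (hRac : ContinuousOn Ra C)
    (L t₀ : ℝ) (hL : 0 < L) (ht₀ : 0 ≤ t₀)
    (hRa : ∀ x ∈ C, 0 < Ra x) (hRb : ∀ x ∈ C, 0 < Rb x)
    (hnum : ∀ x ∈ C, 0 < L - t₀ * Rb x)
    (μl : ℝ) (xl : E) (hxl : xl ∈ C)
    (hmin : IsMinOn (fun x => L - t₀ * Rb x - μl * Ra x) C xl)
    (hF : L - t₀ * Rb xl - μl * Ra xl ≤ 0) :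
    (L - t₀ * Rb xl) / Ra xl ≤ μl ∧
    ((L - t₀ * Rb xl) / Ra xl = μl →
      μl = sInf ((fun x => (L - t₀ * Rb x) / Ra x) '' C)) := by
  have hRaxl := hRa xl hxl
  constructor
  · rw [div_le_iff₀ hRaxl]
    linarith
  · intro heq
    have hF0 : L - t₀ * Rb xl - μl * Ra xl = 0 := by
      have : L - t₀ * Rb xl = μl * Ra xl := by
        field_simp at heq; linarith [heq]
      linarith
    have hlb : ∀ y ∈ (fun x => (L - t₀ * Rb x) / Ra x) '' C, μl ≤ y := by
      rintro y ⟨x, hx, rfl⟩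
      have h2 : L - t₀ * Rb xl - μl * Ra xl ≤ L - t₀ * Rb x - μl * Ra x := hmin hx
      rw [le_div_iff₀ (hRa x hx)]
      linarith
    have hmem : μl ∈ (fun x => (L - t₀ * Rb x) / Ra x) '' C := ⟨xl, hxl, heq⟩
    exact le_antisymm (le_csInf ⟨μl, hmem⟩ hlb) (csInf_le ⟨μl, hlb⟩ hmem)
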